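/- For all integers k >= m >= 0 and all real x, sum over i from 0 to k-m of C(j+m, k-i) * C(k-m, i) * x^i = sum over l from 0 to k-m of (-1)^l * C(k-m, l) * C(k+j-l, j) * (1-x)^l, for every nonnegative integer j (this is identity (2.44) with general parameters j, k, m). -/

import Mathlib

open Finset

lemma aux_vandermonde (j m n l : ℕ) (hl : l ≤ n) :
    ∑ i ∈ range (n + 1), (j + m).choose (m + n - i) * (n.choose i * i.choose l)
      = n.choose l * (m + n + j - l).choose j := by
  have h1 : ∑ i ∈ range (n + 1), (j + m).choose (m + n - i) * (n.choose i * i.choose l)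
      = ∑ i ∈ Ico l (n + 1), (j + m).choose (m + n - i) * (n.choose i * i.choose l) := by
    refine (Finset.sum_subset (fun a ha => by simp only [mem_Ico, mem_range] at *; omega) ?_).symm
    intro i hi hni
    simp only [mem_range] at hi
    simp only [mem_Ico, mem_range] at hni
    have : i < l := by omega
    rw [Nat.choose_eq_zero_of_lt this]; ring
  rw [h1]
  have h2 : ∀ i ∈ Ico l (n + 1), (j + m).choose (m + n - i) * (n.choose i * i.choose l)
      = n.choose l * ((j + m).choose (m + n - i) * (n - l).choose (i - l)) := by
    intro i hi
    simp only [mem_Ico] at hi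
    rw [Nat.choose_mul hi.1]; ring
  rw [Finset.sum_congr rfl h2, ← Finset.mul_sum]
  congr 1
  rw [Finset.sum_Ico_eq_sum_range]
  have h3 : ∀ t ∈ range (n + 1 - l),
      (j + m).choose (m + n - (l + t)) * (n - l).choose (l + t - l)
      = (j + m).choose (m + n - l - t) * (n - l).choose t := by
    intro t _
    rw [show l + t - l = t from by omega, show m + n - (l + t) = m + n - l - t from by omega]
  rw [Finset.sum_congr rfl h3]
  have h4 : ∑ t ∈ range (n + 1 - l), (j + m).choose (m + n - l - t) * (n - l).choose t
      = ∑ t ∈ range (m + n - l + 1), (j + m).choose (m + n - l - t) * (n - l).choose t := by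
    refine Finset.sum_subset (by intro a; simp; omega) ?_
    intro t ht hnt
    simp only [mem_range] at ht hnt
    rw [Nat.choose_eq_zero_of_lt (show n - l < t by omega)]; ring
  rw [h4]
  have h5 := Nat.add_choose_eq (j + m) (n - l) (m + n - l)
  rw [Finset.Nat.sum_antidiagonal_eq_sum_range_succ
    (fun a b => (j + m).choose a * (n - l).choose b)] at h5
  have h6 : ∑ t ∈ range (m + n - l + 1), (j + m).choose (m + n - l - t) * (n - l).choose t
      = ∑ t ∈ range (m + n - l + 1), (j + m).choose t * (n - l).choose (m + n - l - t) := by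
    rw [← Finset.sum_range_reflect (fun t => (j + m).choose t * (n - l).choose (m + n - l - t))
      (m + n - l + 1)]
    refine Finset.sum_congr rfl fun t ht => ?_
    simp only [mem_range] at ht
    congr 2 <;> omega
  rw [h6, ← h5]
  have he : j + m + (n - l) = m + n + j - l := by omega
  rw [he]
  have h7 : m + n - l = m + n + j - l - j := by omega
  rw [h7, Nat.choose_symm (by omega)]
/-- Identity (2.44): for `m ≤ k` and every `j ≥ 0`,
`∑_{i=0}^{k-m} C(j+m, k-i) C(k-m, i) x^i
  = ∑_{l=0}^{k-m} (-1)^l C(k-m, l) C(k+j-l, j) (1-x)^l`. -/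
theorem choose_identity_general (j k m : ℕ) (hmk : m ≤ k) (x : ℝ) :
    ∑ i ∈ Finset.range (k - m + 1),
        ((j + m).choose (k - i) : ℝ) * ((k - m).choose i : ℝ) * x ^ i =
      ∑ l ∈ Finset.range (k - m + 1),
        (-1 : ℝ) ^ l * ((k - m).choose l : ℝ) * ((k + j - l).choose j : ℝ) *
          (1 - x) ^ l := by
  obtain ⟨n, rfl⟩ : ∃ n, k = m + n := ⟨k - m, by omega⟩
  rw [Nat.add_sub_cancel_left]
  have key : ∀ i : ℕ, (x : ℝ) ^ i = ∑ l ∈ range (i + 1), (x - 1) ^ l * (i.choose l : ℝ) := by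
    intro i
    have h := add_pow (x - 1) 1 i
    simpa using h
  set f : ℕ → ℕ → ℝ := fun i l =>
    ((j + m).choose (m + n - i) : ℝ) * (n.choose i : ℝ) * (i.choose l : ℝ) * (x - 1) ^ l with hf
  have h1 : ∑ i ∈ Finset.range (n + 1),
      ((j + m).choose (m + n - i) : ℝ) * (n.choose i : ℝ) * x ^ i
      = ∑ i ∈ Finset.range (n + 1), ∑ l ∈ Finset.range (n + 1), f i l := by
    refine Finset.sum_congr rfl fun i hi => ?_
    simp only [mem_range] at hi
    rw [key i, Finset.mul_sum]
    have hsub := Finset.sum_subset (f := f i)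
      (Finset.range_subset_range.mpr (show i + 1 ≤ n + 1 by omega))
      (fun l hl hnl => by
        simp only [mem_range] at hl hnl
        simp only [hf]
        rw [Nat.choose_eq_zero_of_lt (show i < l by omega)]
        push_cast; ring)
    rw [← hsub]
    exact Finset.sum_congr rfl fun l hl => by simp only [hf]; ring
  rw [h1, Finset.sum_comm]
  refine Finset.sum_congr rfl fun l hl => ?_
  simp only [mem_range] at hl
  have h2 : ∑ i ∈ Finset.range (n + 1), f i l
      = (↑(∑ i ∈ range (n + 1), (j + m).choose (m + n - i) * (n.choose i * i.choose l)) : ℝ)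
        * (x - 1) ^ l := by
    rw [Nat.cast_sum, Finset.sum_mul]
    refine Finset.sum_congr rfl fun i _ => ?_
    rw [hf]; push_cast; ring
  rw [h2, aux_vandermonde j m n l (by omega)]
  have h3 : (x - 1) ^ l = (-1 : ℝ) ^ l * (1 - x) ^ l := by
    rw [← neg_pow, neg_sub]
  rw [h3]; push_cast; ring
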